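/- Every nonzero series b in K((ℝ≤0)) has a unique normal form: there exist unique n ≥ 1, real numbers x₁ ≤ … ≤ xₙ ≤ 0 and series b₁, …, bₙ ∈ K((ℝ≤0)) such that each bᵢ is principal, ot(b₁) ≥ … ≥ ot(bₙ), every element of xᵢ + supp(bᵢ) is strictly less than every element of x_{i+1} + supp(b_{i+1}) for i = 1, …, n−1, and b = b₁t^{x₁} + … + bₙt^{xₙ}. -/

import Mathlib

open Ordinal

/-- The ordinal order type of a well-ordered subset of a linear order. -/
noncomputable def orderTypeSet {Γ : Type*} [LinearOrder Γ] (s : Set Γ) (hs : s.IsWF) : Ordinal :=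
  letI : IsWellFounded s (· < ·) := ⟨hs⟩
  Ordinal.type ((· < ·) : s → s → Prop)

/-- The order type `ot b` of the support of a Hahn series. -/
noncomputable def HahnSeries.ot {Γ : Type*} [LinearOrder Γ] {R : Type*} [Zero R]
    (b : HahnSeries Γ R) : Ordinal :=
  orderTypeSet b.support b.isWF_support

/-- The degree of a Hahn series: the largest ordinal `β` with `ω ^ β ≤ ot b`
(for a nonzero series), implemented as the base-`ω` ordinal logarithm of `ot b`. -/
noncomputable def HahnSeries.deg {Γ : Type*} [LinearOrder Γ] {R : Type*} [Zero R]
    (b : HahnSeries Γ R) : Ordinal :=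
  Ordinal.log Ordinal.omega0 b.ot

/-- A nonzero series is weakly principal if its order type is `ω ^ α` for some ordinal `α`. -/
def weaklyPrincipal {Γ : Type*} [LinearOrder Γ] {R : Type*} [Zero R]
    (b : HahnSeries Γ R) : Prop :=
  ∃ α : Ordinal, b.ot = Ordinal.omega0 ^ α

/-- A series in `K((ℝ≤0))` is principal if it is weakly principal and the
supremum of its support is `0`. -/
def principalSeries {R : Type*} [Zero R] (b : HahnSeries ℝ R) : Prop :=
  weaklyPrincipal b ∧ sSup b.support = 0

section OTS
variable {Γ : Type*} [LinearOrder Γ] {Γ' : Type*} [LinearOrder Γ']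

lemma wf_inst {s : Set Γ} (hs : s.IsWF) : IsWellFounded s ((· < ·) : s → s → Prop) := ⟨hs⟩

lemma orderTypeSet_congr {s t : Set Γ} (hs : s.IsWF) (ht : t.IsWF) (h : s = t) :
    orderTypeSet s hs = orderTypeSet t ht := by subst h; rfl

lemma orderTypeSet_eq_zero_iff {s : Set Γ} (hs : s.IsWF) :
    orderTypeSet s hs = 0 ↔ s = ∅ := by
  haveI := wf_inst hs
  rw [show orderTypeSet s hs = Ordinal.type ((· < ·) : s → s → Prop) from rfl,
    Ordinal.type_eq_zero_iff_isEmpty, Set.isEmpty_coe_sort]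

lemma orderTypeSet_mono {s t : Set Γ} (h : s ⊆ t) (ht : t.IsWF) :
    orderTypeSet s (ht.mono h) ≤ orderTypeSet t ht := by
  haveI := wf_inst (ht.mono h); haveI := wf_inst ht
  exact RelEmbedding.ordinal_type_le ⟨⟨Set.inclusion h, Set.inclusion_injective h⟩, Iff.rfl⟩

lemma orderTypeSet_image (f : Γ ≃o Γ) {s : Set Γ} (hs : s.IsWF) (hfs : (⇑f '' s).IsWF) :
    orderTypeSet (⇑f '' s) hfs = orderTypeSet s hs := by
  haveI := wf_inst hs; haveI := wf_inst hfs
  exact (Ordinal.type_eq.2 ⟨⟨(Equiv.Set.image f s f.injective), by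
    intro a b
    simp only [Equiv.Set.image_apply, Subtype.mk_lt_mk]
    exact f.lt_iff_lt⟩⟩).symm

lemma orderTypeSet_union {s t : Set Γ} (hs : s.IsWF) (ht : t.IsWF)
    (hst : ∀ a ∈ s, ∀ b ∈ t, a < b) :
    orderTypeSet (s ∪ t) (hs.union ht) = orderTypeSet s hs + orderTypeSet t ht := by
  classical
  haveI := wf_inst hs; haveI := wf_inst ht; haveI := wf_inst (hs.union ht)
  have hdisj : Disjoint s t :=
    Set.disjoint_left.2 fun {a} has hat => absurd (hst a has a hat) (lt_irrefl a)
  rw [show orderTypeSet s hs + orderTypeSet t ht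
      = Ordinal.type (Sum.Lex ((· < ·) : s → s → Prop) ((· < ·) : t → t → Prop)) from
    (Ordinal.type_sum_lex _ _).symm]
  refine Ordinal.type_eq.2 ⟨⟨Equiv.Set.union hdisj, ?_⟩⟩
  rintro ⟨a, ha⟩ ⟨b, hb⟩
  rcases ha with ha | ha <;> rcases hb with hb | hb
  · rw [Equiv.Set.union_apply_left hdisj ha, Equiv.Set.union_apply_left hdisj hb]
    simp; exact Iff.rfl
  · rw [Equiv.Set.union_apply_left hdisj ha, Equiv.Set.union_apply_right hdisj hb]
    simp; exact hst a ha b hb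
  · rw [Equiv.Set.union_apply_right hdisj ha, Equiv.Set.union_apply_left hdisj hb]
    simp; exact le_of_lt (hst b hb a ha)
  · rw [Equiv.Set.union_apply_right hdisj ha, Equiv.Set.union_apply_right hdisj hb]
    simp; exact Iff.rfl

lemma orderTypeSet_sep {s : Set Γ} (hs : s.IsWF) {x : Γ} (hx : x ∈ s) :
    haveI := wf_inst hs
    orderTypeSet {y ∈ s | y < x} (hs.mono (Set.sep_subset _ _)) =
      typein ((· < ·) : s → s → Prop) ⟨x, hx⟩ := by
  haveI := wf_inst hs; haveI := wf_inst (hs.mono (Set.sep_subset s (· < x)))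
  rw [← Ordinal.type_subrel]
  refine Ordinal.type_eq.2 ⟨⟨⟨fun y => ⟨⟨y.1, y.2.1⟩, y.2.2⟩, fun z => ⟨z.1.1, z.1.2, z.2⟩,
    fun y => rfl, fun z => rfl⟩, Iff.rfl⟩⟩

/-- The initial segment of a well-founded set of order type `δ` (when `δ ≤` its order type). -/
def iseg (s : Set Γ) (hs : s.IsWF) (δ : Ordinal) : Set Γ :=
  {y ∈ s | orderTypeSet {z ∈ s | z < y} (hs.mono (Set.sep_subset _ _)) < δ}

lemma iseg_subset (s : Set Γ) (hs : s.IsWF) (δ : Ordinal) : iseg s hs δ ⊆ s :=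
  Set.sep_subset _ _

lemma iseg_dc (s : Set Γ) (hs : s.IsWF) (δ : Ordinal) :
    ∀ y ∈ iseg s hs δ, ∀ z ∈ s, z ≤ y → z ∈ iseg s hs δ := by
  intro y hy z hz hzy
  refine ⟨hz, lt_of_le_of_lt ?_ hy.2⟩
  have hsub : {w ∈ s | w < z} ⊆ {w ∈ s | w < y} :=
    fun w hw => ⟨hw.1, lt_of_lt_of_le hw.2 hzy⟩
  exact orderTypeSet_mono hsub (hs.mono (Set.sep_subset _ _))

lemma orderTypeSet_iseg (s : Set Γ) (hs : s.IsWF) (δ : Ordinal)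
    (hδ : δ ≤ orderTypeSet s hs) :
    orderTypeSet (iseg s hs δ) (hs.mono (iseg_subset s hs δ)) = δ := by
  haveI := wf_inst hs
  rcases hδ.lt_or_eq with hlt | heq
  · set e := enum ((· < ·) : s → s → Prop) ⟨δ, hlt⟩ with he
    have hmem : (e : Γ) ∈ s := e.2
    have hseg : iseg s hs δ = {y ∈ s | y < (e : Γ)} := by
      ext y
      constructor
      · rintro ⟨hy, hlt'⟩
        rw [orderTypeSet_sep hs hy] at hlt'
        refine ⟨hy, ?_⟩
        have : typein ((· < ·) : s → s → Prop) ⟨y, hy⟩ <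
            typein ((· < ·) : s → s → Prop) e := by
          exact lt_of_lt_of_eq hlt' (typein_enum _ hlt).symm
        exact (typein_lt_typein ((· < ·) : s → s → Prop)).1 this
      · rintro ⟨hy, hlt'⟩
        refine ⟨hy, ?_⟩
        rw [orderTypeSet_sep hs hy]
        have : typein ((· < ·) : s → s → Prop) ⟨y, hy⟩ <
            typein ((· < ·) : s → s → Prop) e := (typein_lt_typein _).2 hlt'
        exact lt_of_lt_of_eq this (typein_enum _ hlt)
    rw [orderTypeSet_congr _ (hs.mono (Set.sep_subset _ _)) hseg,
      orderTypeSet_sep hs hmem]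
    exact typein_enum _ hlt
  · have hseg : iseg s hs δ = s := by
      ext y
      refine ⟨fun hy => hy.1, fun hy => ⟨hy, ?_⟩⟩
      rw [orderTypeSet_sep hs hy, heq]
      exact typein_lt_type _ _
    rw [orderTypeSet_congr _ hs hseg, heq]

lemma dc_ssubset_lt {s A B : Set Γ} (hs : s.IsWF) (hAs : A ⊆ s) (hBs : B ⊆ s)
    (hA : ∀ a ∈ A, ∀ z ∈ s, z ≤ a → z ∈ A) (hAB : A ⊆ B) (hne : A ≠ B) :
    orderTypeSet A (hs.mono hAs) < orderTypeSet B (hs.mono hBs) := by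
  haveI := wf_inst (hs.mono hBs)
  have hBA : (B \ A).Nonempty := by
    rcases Set.exists_of_ssubset ⟨hAB, fun h => hne (le_antisymm hAB h)⟩ with ⟨x, hxB, hxA⟩
    exact ⟨x, hxB, hxA⟩
  set m := (hs.mono (fun z hz => hBs hz.1)).min hBA with hm
  have hmB : m ∈ B \ A := Set.IsWF.min_mem _ hBA
  have hAeq : A = {y ∈ B | y < m} := by
    ext y
    constructor
    · intro hy
      refine ⟨hAB hy, ?_⟩
      rcases lt_or_ge y m with h | h
      · exact h
      · exact absurd (hA y hy m (hBs hmB.1) h) hmB.2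
    · rintro ⟨hyB, hym⟩
      by_contra hyA
      exact absurd hym (not_lt.2 (Set.IsWF.min_le _ hBA ⟨hyB, hyA⟩))
  calc orderTypeSet A (hs.mono hAs)
      = typein ((· < ·) : B → B → Prop) ⟨m, hmB.1⟩ := by
        rw [orderTypeSet_congr _ ((hs.mono hBs).mono (Set.sep_subset _ _)) hAeq]
        exact orderTypeSet_sep (hs.mono hBs) hmB.1
    _ < _ := typein_lt_type _ _

lemma dc_unique {s A B : Set Γ} (hs : s.IsWF) (hAs : A ⊆ s) (hBs : B ⊆ s)
    (hA : ∀ a ∈ A, ∀ z ∈ s, z ≤ a → z ∈ A) (hB : ∀ a ∈ B, ∀ z ∈ s, z ≤ a → z ∈ B)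
    (hot : orderTypeSet A (hs.mono hAs) = orderTypeSet B (hs.mono hBs)) : A = B := by
  have hcomp : A ⊆ B ∨ B ⊆ A := by
    by_contra h
    push_neg at h
    obtain ⟨hab, hba⟩ := h
    rcases Set.not_subset.1 hab with ⟨a, haA, haB⟩
    rcases Set.not_subset.1 hba with ⟨b, hbB, hbA⟩
    rcases le_total a b with h' | h'
    · exact haB (hB b hbB a (hAs haA) h')
    · exact hbA (hA a haA b (hBs hbB) h')
  rcases hcomp with h | h
  · by_contra hne
    exact absurd hot (ne_of_lt (dc_ssubset_lt hs hAs hBs hA h hne))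
  · by_contra hne
    exact absurd hot.symm (ne_of_lt (dc_ssubset_lt hs hBs hAs hB h (fun e => hne e.symm)))

end OTS


section Hahn
variable {K : Type*} [Field K]

lemma ot_congr {b c : HahnSeries ℝ K} (h : b.support = c.support) : b.ot = c.ot :=
  orderTypeSet_congr _ _ h

lemma ot_eq_zero_iff {b : HahnSeries ℝ K} : b.ot = 0 ↔ b = 0 := by
  rw [HahnSeries.ot, orderTypeSet_eq_zero_iff, HahnSeries.support_eq_empty_iff]

/-- restriction of a Hahn series to a set -/
noncomputable def hres (b : HahnSeries ℝ K) (A : Set ℝ) : HahnSeries ℝ K where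
  coeff z := @ite _ (z ∈ A) (Classical.dec _) (b.coeff z) 0
  isPWO_support' := b.isPWO_support'.mono (by
    intro z hz
    simp only [Function.mem_support] at hz ⊢
    by_cases h : z ∈ A
    · rw [if_pos h] at hz; exact hz
    · rw [if_neg h] at hz; exact absurd rfl hz)

lemma hres_coeff_of_mem (b : HahnSeries ℝ K) {A : Set ℝ} {z : ℝ} (h : z ∈ A) :
    (hres b A).coeff z = b.coeff z := by
  show @ite _ (z ∈ A) (Classical.dec _) (b.coeff z) 0 = b.coeff z
  rw [if_pos h]

lemma hres_coeff_of_not_mem (b : HahnSeries ℝ K) {A : Set ℝ} {z : ℝ} (h : z ∉ A) :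
    (hres b A).coeff z = 0 := by
  show @ite _ (z ∈ A) (Classical.dec _) (b.coeff z) 0 = 0
  rw [if_neg h]

lemma hres_support (b : HahnSeries ℝ K) (A : Set ℝ) :
    (hres b A).support = b.support ∩ A := by
  ext z
  simp only [HahnSeries.mem_support, Set.mem_inter_iff]
  by_cases h : z ∈ A
  · rw [hres_coeff_of_mem b h]; simp [h]
  · rw [hres_coeff_of_not_mem b h]; simp [h]
lemma single_one_mul_coeff (x : ℝ) (c : HahnSeries ℝ K) (z : ℝ) :
    (HahnSeries.single x (1 : K) * c).coeff z = c.coeff (z - x) := by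
  have := HahnSeries.coeff_single_mul_add (r := (1 : K)) (x := c) (a := z - x) (b := x)
  rw [show z - x + x = z by ring] at this
  rw [this, one_mul]

lemma single_one_mul_support (x : ℝ) (c : HahnSeries ℝ K) :
    (HahnSeries.single x (1 : K) * c).support = (fun y => x + y) '' c.support := by
  ext z
  simp only [HahnSeries.mem_support, single_one_mul_coeff, Set.mem_image]
  constructor
  · intro h
    exact ⟨z - x, h, by ring⟩
  · rintro ⟨y, hy, rfl⟩
    rwa [show x + y - x = y by ring]

lemma single_one_mul_ot (x : ℝ) (c : HahnSeries ℝ K) :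
    (HahnSeries.single x (1 : K) * c).ot = c.ot := by
  have h1 : (HahnSeries.single x (1 : K) * c).support
      = ⇑(OrderIso.addLeft x) '' c.support := by
    rw [single_one_mul_support]; rfl
  have h2 : (⇑(OrderIso.addLeft x) '' c.support).IsWF := by
    rw [← h1]; exact (HahnSeries.single x (1 : K) * c).isWF_support
  rw [HahnSeries.ot, HahnSeries.ot, orderTypeSet_congr _ h2 h1,
    orderTypeSet_image (OrderIso.addLeft x) c.isWF_support h2]

lemma two_sum_support {c T : HahnSeries ℝ K}
    (hsep : ∀ x ∈ c.support, ∀ y ∈ T.support, x < y) :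
    (c + T).support = c.support ∪ T.support ∧
    (∀ z ∈ c.support, (c + T).coeff z = c.coeff z) ∧
    (∀ z ∈ T.support, (c + T).coeff z = T.coeff z) ∧
    (c + T).ot = c.ot + T.ot := by
  have hdis : ∀ z, z ∈ c.support → z ∈ T.support → False :=
    fun z h1 h2 => lt_irrefl z (hsep z h1 z h2)
  have hc : ∀ z ∈ c.support, (c + T).coeff z = c.coeff z := by
    intro z hz
    have : T.coeff z = 0 := by
      by_contra h
      exact hdis z hz h
    rw [HahnSeries.coeff_add, this, add_zero]
  have hT : ∀ z ∈ T.support, (c + T).coeff z = T.coeff z := by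
    intro z hz
    have : c.coeff z = 0 := by
      by_contra h
      exact hdis z h hz
    rw [HahnSeries.coeff_add, this, zero_add]
  have hsupp : (c + T).support = c.support ∪ T.support := by
    apply Set.Subset.antisymm (HahnSeries.support_add_subset _ _)
    rintro z (hz | hz)
    · intro h
      exact hz (by rwa [← hc z hz])
    · intro h
      exact hz (by rwa [← hT z hz])
  refine ⟨hsupp, hc, hT, ?_⟩
  rw [HahnSeries.ot, HahnSeries.ot, HahnSeries.ot,
    orderTypeSet_congr _ (c.isWF_support.union T.isWF_support) hsupp,
    orderTypeSet_union c.isWF_support T.isWF_support hsep]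

lemma sum_blocks {n : ℕ} (c : Fin n → HahnSeries ℝ K)
    (hsep : ∀ i j : Fin n, i < j → ∀ x ∈ (c i).support, ∀ y ∈ (c j).support, x < y) :
    (∑ i, c i).support = ⋃ i, (c i).support ∧
    (∀ (i : Fin n), ∀ z ∈ (c i).support, (∑ i, c i).coeff z = (c i).coeff z) ∧
    (∑ i, c i).ot = (List.ofFn fun i => (c i).ot).sum := by
  induction n with
  | zero =>
    refine ⟨by simp, fun i => absurd i.2 (by simp), ?_⟩
    simp only [List.ofFn_zero, List.sum_nil, Finset.univ_eq_empty, Finset.sum_empty]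
    rw [ot_eq_zero_iff]
  | succ n IH =>
    obtain ⟨IH1, IH2, IH3⟩ := IH (fun i => c i.succ)
      (fun i j hij => hsep i.succ j.succ (by simpa using hij))
    set T := ∑ i : Fin n, c i.succ with hTdef
    have hsum : ∑ i, c i = c 0 + T := Fin.sum_univ_succ c
    have hsep0 : ∀ x ∈ (c 0).support, ∀ y ∈ T.support, x < y := by
      intro x hx y hy
      rw [IH1] at hy
      rcases Set.mem_iUnion.1 hy with ⟨i, hi⟩
      exact hsep 0 i.succ (Fin.succ_pos i) x hx y hi
    obtain ⟨h1, h2, h3, h4⟩ := two_sum_support hsep0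
    have hun : (c 0).support ∪ T.support = ⋃ i, (c i).support := by
      rw [IH1]
      ext z
      simp only [Set.mem_union, Set.mem_iUnion]
      rw [Fin.exists_fin_succ]
    refine ⟨by rw [hsum, h1, hun], ?_, ?_⟩
    · intro i z hz
      rw [hsum]
      refine Fin.cases ?_ ?_ i hz
      · intro hz; exact h2 z hz
      · intro j hz
        rw [h3 z (by rw [IH1]; exact Set.mem_iUnion.2 ⟨j, hz⟩)]
        exact IH2 j z hz
    · rw [hsum, h4, IH3, List.ofFn_succ, List.sum_cons]

end Hahn

section Ord

lemma ord_add_mul_nat (a : Ordinal) (n : ℕ) : a + a * (n : Ordinal) = a * ((n + 1 : ℕ) : Ordinal) := by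
  rw [← mul_one a, mul_assoc, one_mul, ← mul_add, mul_one,
    Ordinal.one_add_natCast]
  simp

lemma list_sum_le_ordinal {a : Ordinal} : ∀ {l : List Ordinal},
    (∀ x ∈ l, x ≤ a) → l.sum ≤ a * l.length := by
  intro l
  induction l with
  | nil => intro _; simp
  | cons x l IH =>
    intro h
    rw [List.sum_cons, List.length_cons]
    have h1 : l.sum ≤ a * l.length := IH (fun y hy => h y (List.mem_cons_of_mem x hy))
    have h2 : x + l.sum ≤ a + a * l.length := add_le_add (h x List.mem_cons_self) h1
    refine h2.trans (le_of_eq ?_)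
    exact ord_add_mul_nat a l.length

lemma lt_add_self_of_lt_mul_omega0 {a b : Ordinal} (ha : 0 < a) (h : b < a * Ordinal.omega0) :
    b < a + b := by
  have hm : b / a < Ordinal.omega0 := (Ordinal.div_lt ha.ne').2 h
  have hs : b % a < a := Ordinal.mod_lt b ha.ne'
  have hb : a * (b / a) + b % a = b := Ordinal.div_add_mod b a
  rcases Ordinal.lt_omega0.1 hm with ⟨k, hk⟩
  calc b = a * (b / a) + b % a := hb.symm
    _ < a * (b / a) + a := by exact (add_lt_add_iff_left _).2 hs
    _ = a + a * (b / a) := by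
        rw [hk, ord_add_mul_nat a k, Ordinal.natCast_succ, mul_succ]
    _ ≤ a + b := by
        conv_rhs => rw [← hb]
        exact add_le_add_right (le_self_add) a

end Ord

section NF
variable {K : Type*} [Field K]

def IsNF (b : HahnSeries ℝ K) (nf : Σ n : ℕ, (Fin n → ℝ) × (Fin n → HahnSeries ℝ K)) : Prop :=
  1 ≤ nf.1 ∧
  (∀ i j : Fin nf.1, i ≤ j → nf.2.1 i ≤ nf.2.1 j) ∧
  (∀ i, nf.2.1 i ≤ 0) ∧
  (∀ i, (∀ x ∈ (nf.2.2 i).support, x ≤ 0) ∧ principalSeries (nf.2.2 i)) ∧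
  (∀ i j : Fin nf.1, i ≤ j → (nf.2.2 j).ot ≤ (nf.2.2 i).ot) ∧
  (∀ i j : Fin nf.1, i < j →
    ∀ x ∈ (nf.2.2 i).support, ∀ y ∈ (nf.2.2 j).support,
      nf.2.1 i + x < nf.2.1 j + y) ∧
  ∑ i, HahnSeries.single (nf.2.1 i) (1 : K) * nf.2.2 i = b

variable {b : HahnSeries ℝ K} {n : ℕ} {x : Fin n → ℝ} {bs : Fin n → HahnSeries ℝ K}

lemma NF_supp_ne (h : IsNF b ⟨n, (x, bs)⟩) (i : Fin n) : (bs i).support.Nonempty := by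
  obtain ⟨α, hα⟩ := (h.2.2.2.1 i).2.1
  replace hα : (bs i).ot = Ordinal.omega0 ^ α := hα
  rw [HahnSeries.support_nonempty_iff]
  intro h0
  rw [h0, ot_eq_zero_iff.2 rfl] at hα
  exact Ordinal.opow_ne_zero α Ordinal.omega0_ne_zero hα.symm

lemma NF_sep (h : IsNF b ⟨n, (x, bs)⟩) : ∀ i j : Fin n, i < j →
    ∀ u ∈ (HahnSeries.single (x i) (1 : K) * bs i).support,
    ∀ v ∈ (HahnSeries.single (x j) (1 : K) * bs j).support, u < v := by
  intro i j hij u hu v hv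
  rw [single_one_mul_support] at hu hv
  obtain ⟨p, hp, rfl⟩ := hu
  obtain ⟨q, hq, rfl⟩ := hv
  exact h.2.2.2.2.2.1 i j hij p hp q hq

lemma NF_facts (h : IsNF b ⟨n, (x, bs)⟩) :
    b.support = (⋃ i, (HahnSeries.single (x i) (1 : K) * bs i).support) ∧
    (∀ i : Fin n, ∀ z ∈ (HahnSeries.single (x i) (1 : K) * bs i).support,
      b.coeff z = (HahnSeries.single (x i) (1 : K) * bs i).coeff z) ∧
    b.ot = (List.ofFn fun i => (bs i).ot).sum := by
  obtain ⟨h1, h2, h3⟩ := sum_blocks (fun i => HahnSeries.single (x i) (1 : K) * bs i) (NF_sep h)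
  rw [h.2.2.2.2.2.2] at h1 h2 h3
  refine ⟨h1, h2, ?_⟩
  rw [h3]
  simp only [single_one_mul_ot]

lemma NF_x_eq (h : IsNF b ⟨n, (x, bs)⟩) (i : Fin n) :
    x i = sSup ((HahnSeries.single (x i) (1 : K) * bs i).support) := by
  rw [single_one_mul_support]
  have hne := NF_supp_ne h i
  have hbdd : BddAbove (bs i).support := ⟨0, fun z hz => (h.2.2.2.1 i).1 z hz⟩
  have := (OrderIso.addLeft (x i)).map_csSup' hne hbdd
  simp only [OrderIso.addLeft_apply] at this
  rw [← this, (h.2.2.2.1 i).2.2, add_zero]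

lemma NF_head_dc (h : IsNF b ⟨n, (x, bs)⟩) (hn : 0 < n) :
    ∀ u ∈ (HahnSeries.single (x ⟨0, hn⟩) (1 : K) * bs ⟨0, hn⟩).support,
    ∀ z ∈ b.support, z ≤ u → z ∈ (HahnSeries.single (x ⟨0, hn⟩) (1 : K) * bs ⟨0, hn⟩).support := by
  intro u hu z hz hzu
  rw [(NF_facts h).1] at hz
  rcases Set.mem_iUnion.1 hz with ⟨j, hj⟩
  rcases Nat.eq_zero_or_pos j.val with hj0 | hj0
  · have hje : j = ⟨0, hn⟩ := Fin.ext hj0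
    rwa [hje] at hj
  · have hlt : (⟨0, hn⟩ : Fin n) < j := by rw [Fin.lt_def]; exact hj0
    exact absurd hzu (not_le.2 (NF_sep h ⟨0, hn⟩ j hlt u hu z hj))

end NF

section Exist
variable {K : Type*} [Field K]

lemma nf_exists (γ : Ordinal) : ∀ (b : HahnSeries ℝ K), b.ot = γ → b ≠ 0 →
    (∀ x ∈ b.support, x ≤ 0) → ∃ nf, IsNF b nf := by
  induction γ using Ordinal.induction with
  | _ γ IH =>
  intro b hγ hb0 hb
  have hγ0 : γ ≠ 0 := fun h => hb0 (ot_eq_zero_iff.1 (hγ.trans h))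
  set l := Ordinal.log Ordinal.omega0 γ with hl
  set δ := Ordinal.omega0 ^ l with hδ
  have hδγ : δ ≤ γ := Ordinal.opow_log_le_self _ hγ0
  have hδ0 : δ ≠ 0 := Ordinal.opow_ne_zero l Ordinal.omega0_ne_zero
  have hγlt : γ < Ordinal.omega0 ^ Order.succ l :=
    Ordinal.lt_opow_succ_log_self Ordinal.one_lt_omega0 γ
  set A := iseg b.support b.isWF_support δ with hA
  have hAsub : A ⊆ b.support := iseg_subset _ _ _
  have hAwf : A.IsWF := b.isWF_support.mono hAsub
  have hotA : orderTypeSet A hAwf = δ :=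
    orderTypeSet_iseg _ _ _ (by rw [show orderTypeSet b.support b.isWF_support = b.ot from rfl, hγ]; exact hδγ)
  set c := hres b A with hc
  set r := b - c with hr
  have hcsupp : c.support = A := by
    rw [hc, hres_support, Set.inter_eq_self_of_subset_right hAsub]
  have hrcoeff_mem : ∀ z ∈ A, r.coeff z = 0 := by
    intro z hz
    rw [hr, HahnSeries.coeff_sub, hc, hres_coeff_of_mem b hz, _root_.sub_self]
  have hrcoeff_not : ∀ z, z ∉ A → r.coeff z = b.coeff z := by
    intro z hz
    rw [hr, HahnSeries.coeff_sub, hc, hres_coeff_of_not_mem b hz, _root_.sub_zero]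
  have hrsupp : r.support = b.support \ A := by
    ext z
    constructor
    · intro hz
      by_cases h : z ∈ A
      · exact absurd (hrcoeff_mem z h) hz
      · rw [HahnSeries.mem_support, hrcoeff_not z h] at hz
        exact ⟨hz, h⟩
    · rintro ⟨hzb, hzA⟩
      rw [HahnSeries.mem_support, hrcoeff_not z hzA]
      exact hzb
  have hsep : ∀ u ∈ A, ∀ v ∈ r.support, u < v := by
    intro u hu v hv
    rw [hrsupp] at hv
    rcases lt_or_ge u v with h | h
    · exact h
    · exact absurd (iseg_dc b.support b.isWF_support δ u hu v hv.1 h) hv.2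
  have hunion : b.support = A ∪ r.support := by
    rw [hrsupp]
    exact (Set.union_diff_cancel hAsub).symm
  have hotsum : γ = δ + r.ot := by
    rw [← hγ, HahnSeries.ot, orderTypeSet_congr b.isWF_support (hAwf.union r.isWF_support) hunion,
      orderTypeSet_union hAwf r.isWF_support hsep, hotA]
    rfl
  have hbcr : b = c + r := by rw [hr]; ring
  have hotc : c.ot = δ := by
    rw [HahnSeries.ot, orderTypeSet_congr c.isWF_support hAwf hcsupp, hotA]
  have hAne : A.Nonempty := by
    rw [Set.nonempty_iff_ne_empty]
    intro h
    apply hδ0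
    rw [← hotA]
    exact (orderTypeSet_eq_zero_iff hAwf).2 h
  have hA0 : ∀ a ∈ A, a ≤ 0 := fun a ha => hb a (hAsub ha)
  set x₀ := sSup A with hx₀def
  have hAbdd : BddAbove A := ⟨0, fun a ha => hA0 a ha⟩
  have hx₀le : x₀ ≤ 0 := csSup_le hAne hA0
  set b₀ := HahnSeries.single (-x₀) (1 : K) * c with hb₀
  have hb₀supp : b₀.support = (fun y => -x₀ + y) '' A := by
    rw [hb₀, single_one_mul_support, hcsupp]
  have hcb₀ : HahnSeries.single x₀ (1 : K) * b₀ = c := by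
    rw [hb₀, ← mul_assoc, HahnSeries.single_mul_single, add_neg_cancel, mul_one,
      HahnSeries.single_zero_one, one_mul]
  have hotb₀ : b₀.ot = δ := by rw [hb₀, single_one_mul_ot, hotc]
  have hb₀le : ∀ u ∈ b₀.support, u ≤ 0 := by
    intro u hu
    rw [hb₀supp] at hu
    obtain ⟨a, ha, rfl⟩ := hu
    have : a ≤ x₀ := le_csSup hAbdd ha
    show -x₀ + a ≤ 0
    linarith
  have hb₀sup : sSup b₀.support = 0 := by
    have hmap := (OrderIso.addLeft (-x₀)).map_csSup' hAne hAbdd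
    simp only [OrderIso.addLeft_apply] at hmap
    rw [hb₀supp, ← hmap]
    exact neg_add_cancel _
  have hb₀prin : principalSeries b₀ := ⟨⟨l, hotb₀⟩, hb₀sup⟩
  have hx₀A : ∀ u ∈ b₀.support, x₀ + u ∈ A := by
    intro u hu
    rw [hb₀supp] at hu
    obtain ⟨a, ha, rfl⟩ := hu
    rwa [show x₀ + (-x₀ + a) = a by ring]
  by_cases hr0 : r = 0
  · refine ⟨⟨1, (fun _ => x₀, fun _ => b₀)⟩, le_refl 1, fun i j _ => le_refl _,
      fun i => hx₀le, fun i => ⟨hb₀le, hb₀prin⟩, fun i j _ => le_refl _,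
      fun i j hij => absurd (Subsingleton.elim i j) (ne_of_lt hij), ?_⟩
    rw [Fin.sum_univ_one, hcb₀, hbcr, hr0, add_zero]
  · have hr_ot_lt : r.ot < γ := by
      have h1 : γ < δ + γ := lt_add_self_of_lt_mul_omega0 (pos_iff_ne_zero.2 hδ0)
        (by rw [hδ, ← Ordinal.opow_succ]; exact hγlt)
      have h2 : δ + r.ot < δ + γ := by rw [← hotsum]; exact h1
      exact (add_lt_add_iff_left δ).1 h2
    have hrle : ∀ z ∈ r.support, z ≤ 0 := by
      intro z hz
      rw [hrsupp] at hz
      exact hb z hz.1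
    obtain ⟨⟨m, y, cs⟩, hnf⟩ := IH r.ot hr_ot_lt r rfl hr0 hrle
    obtain ⟨hm1, hymono, hyle, hprin, hotmono, hsep', hsum'⟩ := hnf
    have hnf' : IsNF r ⟨m, (y, cs)⟩ := ⟨hm1, hymono, hyle, hprin, hotmono, hsep', hsum'⟩
    have hfacts := NF_facts hnf'
    have hsuppsub : ∀ j : Fin m, (HahnSeries.single (y j) (1 : K) * cs j).support ⊆ r.support := by
      intro j
      rw [hfacts.1]
      exact Set.subset_iUnion (fun i => (HahnSeries.single (y i) (1 : K) * cs i).support) j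
    have hx₀lev : ∀ v ∈ r.support, x₀ ≤ v :=
      fun v hv => csSup_le hAne (fun a ha => (hsep a ha v hv).le)
    have hyj : ∀ j : Fin m, x₀ ≤ y j := by
      intro j
      obtain ⟨q, hq⟩ := NF_supp_ne hnf' j
      have hv : y j + q ∈ r.support := hsuppsub j (by
        rw [single_one_mul_support]; exact ⟨q, hq, rfl⟩)
      have h1 : x₀ ≤ y j + q := hx₀lev _ hv
      have h2 : q ≤ 0 := (hprin j).1 q hq
      linarith
    have hotle : ∀ j : Fin m, (cs j).ot ≤ δ := by
      intro j
      obtain ⟨α, hα⟩ := (hprin j).2.1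
      replace hα : (cs j).ot = Ordinal.omega0 ^ α := hα
      have h1 : (cs j).ot ≤ r.ot := by
        rw [← single_one_mul_ot (y j) (cs j), HahnSeries.ot, HahnSeries.ot]
        exact orderTypeSet_mono (hsuppsub j) r.isWF_support
      have h2 : (cs j).ot < Ordinal.omega0 ^ Order.succ l := by
        calc (cs j).ot ≤ r.ot := h1
          _ ≤ γ := by rw [hotsum]; exact le_add_self
          _ < _ := hγlt
      rw [hα] at h2 ⊢
      have hcmp : α < Order.succ l := (Ordinal.opow_lt_opow_iff_right Ordinal.one_lt_omega0).1 h2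
      exact Ordinal.opow_le_opow_right Ordinal.omega0_pos (Order.lt_succ_iff.1 hcmp)
    refine ⟨⟨m + 1, (Fin.cases x₀ y, Fin.cases b₀ cs)⟩, Nat.le_add_left 1 m, ?_, ?_, ?_, ?_, ?_, ?_⟩
    · intro i j
      induction i using Fin.cases with
      | zero =>
        induction j using Fin.cases with
        | zero => intro _; exact le_refl _
        | succ j => intro _; simp only [Fin.cases_zero, Fin.cases_succ]; exact hyj j
      | succ i =>
        induction j using Fin.cases with
        | zero => intro hij; exact absurd (Fin.le_zero_iff.1 hij) (Fin.succ_ne_zero i)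
        | succ j =>
          intro hij
          simp only [Fin.cases_succ]
          exact hymono i j (by rwa [Fin.succ_le_succ_iff] at hij)
    · intro i
      induction i using Fin.cases with
      | zero => simpa using hx₀le
      | succ i => simpa using hyle i
    · intro i
      induction i using Fin.cases with
      | zero => simpa using ⟨hb₀le, hb₀prin⟩
      | succ i => simpa using hprin i
    · intro i j
      induction i using Fin.cases with
      | zero =>
        induction j using Fin.cases with
        | zero => intro _; exact le_refl _
        | succ j =>
          intro _
          simp only [Fin.cases_zero, Fin.cases_succ]
          rw [hotb₀]
          exact hotle j
      | succ i =>
        induction j using Fin.cases with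
        | zero => intro hij; exact absurd (Fin.le_zero_iff.1 hij) (Fin.succ_ne_zero i)
        | succ j =>
          intro hij
          simp only [Fin.cases_succ]
          exact hotmono i j (by rwa [Fin.succ_le_succ_iff] at hij)
    · intro i j
      induction i using Fin.cases with
      | zero =>
        induction j using Fin.cases with
        | zero => intro hij; exact absurd hij (lt_irrefl _)
        | succ j =>
          intro _ u hu v hv
          simp only [Fin.cases_zero, Fin.cases_succ] at hu hv ⊢
          have hv' : y j + v ∈ r.support := hsuppsub j (by
            rw [single_one_mul_support]; exact ⟨v, hv, rfl⟩)
          exact hsep _ (hx₀A u hu) _ hv'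
      | succ i =>
        induction j using Fin.cases with
        | zero => intro hij; exact absurd hij (Fin.not_lt_zero _)
        | succ j =>
          intro hij u hu v hv
          simp only [Fin.cases_succ] at hu hv ⊢
          exact hsep' i j (by rwa [Fin.succ_lt_succ_iff] at hij) u hu v hv
    · rw [Fin.sum_univ_succ]
      simp only [Fin.cases_zero, Fin.cases_succ]
      rw [hcb₀, hsum']
      exact hbcr.symm

end Exist

section Uniq
variable {K : Type*} [Field K]

lemma NF_ot_bound {b : HahnSeries ℝ K} {n : ℕ} {x : Fin n → ℝ} {bs : Fin n → HahnSeries ℝ K}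
    (h : IsNF b ⟨n, (x, bs)⟩) (hn : 0 < n) :
    b.ot ≤ (bs ⟨0, hn⟩).ot * (n : Ordinal) := by
  have hsum := (NF_facts h).2.2
  have hbound : ∀ u ∈ (List.ofFn fun i => (bs i).ot), u ≤ (bs ⟨0, hn⟩).ot := by
    intro u hu
    rw [List.mem_ofFn] at hu
    obtain ⟨i, rfl⟩ := hu
    exact h.2.2.2.2.1 ⟨0, hn⟩ i (by rw [Fin.le_def]; exact Nat.zero_le _)
  have := list_sum_le_ordinal hbound
  rw [List.length_ofFn] at this
  rw [hsum]
  exact this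

lemma NF_head_ot_lt_false {b : HahnSeries ℝ K} {n : ℕ} {x : Fin n → ℝ}
    {bs : Fin n → HahnSeries ℝ K} {n' : ℕ} {x' : Fin n' → ℝ} {bs' : Fin n' → HahnSeries ℝ K}
    (h : IsNF b ⟨n, (x, bs)⟩) (h' : IsNF b ⟨n', (x', bs')⟩) (hn : 0 < n) (hn' : 0 < n')
    (hlt : (bs ⟨0, hn⟩).ot < (bs' ⟨0, hn'⟩).ot) : False := by
  obtain ⟨α, hα⟩ := (h.2.2.2.1 ⟨0, hn⟩).2.1
  obtain ⟨α', hα'⟩ := (h'.2.2.2.1 ⟨0, hn'⟩).2.1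
  replace hα : (bs ⟨0, hn⟩).ot = Ordinal.omega0 ^ α := hα
  replace hα' : (bs' ⟨0, hn'⟩).ot = Ordinal.omega0 ^ α' := hα'
  have hαα : α < α' := by
    rw [hα, hα'] at hlt
    exact (Ordinal.opow_lt_opow_iff_right Ordinal.one_lt_omega0).1 hlt
  have hS'sub : (HahnSeries.single (x' ⟨0, hn'⟩) (1 : K) * bs' ⟨0, hn'⟩).support ⊆ b.support := by
    rw [(NF_facts h').1]
    exact Set.subset_iUnion (fun i => (HahnSeries.single (x' i) (1 : K) * bs' i).support) _
  have hS'le : (bs' ⟨0, hn'⟩).ot ≤ b.ot := by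
    rw [← single_one_mul_ot (x' ⟨0, hn'⟩) (bs' ⟨0, hn'⟩), HahnSeries.ot, HahnSeries.ot]
    exact orderTypeSet_mono hS'sub b.isWF_support
  have hchain : b.ot < b.ot := by
    calc b.ot ≤ (bs ⟨0, hn⟩).ot * (n : Ordinal) := NF_ot_bound h hn
      _ < (bs ⟨0, hn⟩).ot * Ordinal.omega0 := by
          rw [mul_lt_mul_iff_right₀]
          · exact Ordinal.nat_lt_omega0 n
          · rw [hα]; exact Ordinal.opow_pos α Ordinal.omega0_pos
      _ = Ordinal.omega0 ^ Order.succ α := by rw [hα, Ordinal.opow_succ]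
      _ ≤ Ordinal.omega0 ^ α' :=
          Ordinal.opow_le_opow_right Ordinal.omega0_pos (Order.succ_le_of_lt hαα)
      _ = (bs' ⟨0, hn'⟩).ot := hα'.symm
      _ ≤ b.ot := hS'le
  exact absurd hchain (lt_irrefl _)

lemma NF_head_eq {b : HahnSeries ℝ K} {n : ℕ} {x : Fin n → ℝ}
    {bs : Fin n → HahnSeries ℝ K} {n' : ℕ} {x' : Fin n' → ℝ} {bs' : Fin n' → HahnSeries ℝ K}
    (h : IsNF b ⟨n, (x, bs)⟩) (h' : IsNF b ⟨n', (x', bs')⟩) (hn : 0 < n) (hn' : 0 < n') :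
    x ⟨0, hn⟩ = x' ⟨0, hn'⟩ ∧ bs ⟨0, hn⟩ = bs' ⟨0, hn'⟩ := by
  set S := (HahnSeries.single (x ⟨0, hn⟩) (1 : K) * bs ⟨0, hn⟩).support with hS
  set S' := (HahnSeries.single (x' ⟨0, hn'⟩) (1 : K) * bs' ⟨0, hn'⟩).support with hS'
  have hSsub : S ⊆ b.support := by
    rw [hS, (NF_facts h).1]
    exact Set.subset_iUnion (fun i => (HahnSeries.single (x i) (1 : K) * bs i).support) _
  have hS'sub : S' ⊆ b.support := by
    rw [hS', (NF_facts h').1]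
    exact Set.subset_iUnion (fun i => (HahnSeries.single (x' i) (1 : K) * bs' i).support) _
  have hotSS : orderTypeSet S (b.isWF_support.mono hSsub)
      = orderTypeSet S' (b.isWF_support.mono hS'sub) := by
    have e1 : orderTypeSet S (b.isWF_support.mono hSsub) = (bs ⟨0, hn⟩).ot :=
      single_one_mul_ot _ _
    have e2 : orderTypeSet S' (b.isWF_support.mono hS'sub) = (bs' ⟨0, hn'⟩).ot :=
      single_one_mul_ot _ _
    rw [e1, e2]
    rcases lt_trichotomy (bs ⟨0, hn⟩).ot (bs' ⟨0, hn'⟩).ot with hc | hc | hc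
    · exact absurd (NF_head_ot_lt_false h h' hn hn' hc) id
    · exact hc
    · exact absurd (NF_head_ot_lt_false h' h hn' hn hc) id
  have hSeq : S = S' := by
    refine dc_unique b.isWF_support hSsub hS'sub ?_ ?_ hotSS
    · intro a ha z hz hza
      exact NF_head_dc h hn a ha z hz hza
    · intro a ha z hz hza
      exact NF_head_dc h' hn' a ha z hz hza
  have hxeq : x ⟨0, hn⟩ = x' ⟨0, hn'⟩ := by
    rw [NF_x_eq h ⟨0, hn⟩, NF_x_eq h' ⟨0, hn'⟩, ← hS, ← hS', hSeq]
  refine ⟨hxeq, ?_⟩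
  ext g
  by_cases hg : x ⟨0, hn⟩ + g ∈ S
  · have e1 : b.coeff (x ⟨0, hn⟩ + g) = (bs ⟨0, hn⟩).coeff g := by
      rw [(NF_facts h).2.1 ⟨0, hn⟩ _ hg, single_one_mul_coeff]
      congr 1
      ring
    have hg' : x' ⟨0, hn'⟩ + g ∈ S' := by rw [← hxeq, ← hSeq]; exact hg
    have e2 : b.coeff (x' ⟨0, hn'⟩ + g) = (bs' ⟨0, hn'⟩).coeff g := by
      rw [(NF_facts h').2.1 ⟨0, hn'⟩ _ hg', single_one_mul_coeff]
      congr 1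
      ring
    rw [← e1, ← e2, hxeq]
  · have e1 : (bs ⟨0, hn⟩).coeff g = 0 := by
      by_contra hne
      exact hg (by rw [hS, single_one_mul_support]; exact ⟨g, hne, rfl⟩)
    have e2 : (bs' ⟨0, hn'⟩).coeff g = 0 := by
      by_contra hne
      refine hg ?_
      rw [hSeq, hS', hxeq]
      rw [single_one_mul_support]
      exact ⟨g, hne, rfl⟩
    rw [e1, e2]

end Uniq

section Final
variable {K : Type*} [Field K]

lemma nf_unique : ∀ (n : ℕ) (b : HahnSeries ℝ K)
    (nf nf' : Σ n : ℕ, (Fin n → ℝ) × (Fin n → HahnSeries ℝ K)),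
    IsNF b nf → IsNF b nf' → nf.1 = n → nf = nf' := by
  intro n
  induction n with
  | zero =>
    intro b nf nf' h h' h0
    exact absurd (h0 ▸ h.1) (by norm_num)
  | succ n IH =>
    intro b nf nf' h h' hlen
    obtain ⟨m, x, bs⟩ := nf
    obtain ⟨m', x', bs'⟩ := nf'
    simp only at hlen
    subst hlen
    have hn : 0 < n + 1 := Nat.succ_pos n
    have hn' : 0 < m' := lt_of_lt_of_le Nat.zero_lt_one h'.1
    obtain ⟨hx0, hb0⟩ := NF_head_eq h h' hn hn'
    have hsuppb : b.support = ⋃ i, (HahnSeries.single (x i) (1 : K) * bs i).support :=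
      (NF_facts h).1
    have hsuppb' : b.support = ⋃ i, (HahnSeries.single (x' i) (1 : K) * bs' i).support :=
      (NF_facts h').1
    rcases Nat.eq_zero_or_pos n with rfl | hnpos
    · -- length one
      have hm' : m' = 1 := by
        by_contra hne
        have hm2 : 2 ≤ m' := by omega
        set j : Fin m' := ⟨1, by omega⟩ with hj
        obtain ⟨q, hq⟩ := NF_supp_ne h' j
        have hvj : x' j + q ∈ (HahnSeries.single (x' j) (1 : K) * bs' j).support := by
          rw [single_one_mul_support]; exact ⟨q, hq, rfl⟩
        have hvb : x' j + q ∈ b.support := by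
          rw [hsuppb']
          exact Set.mem_iUnion.2 ⟨j, hvj⟩
        have hv0 : x' j + q ∈ (HahnSeries.single (x' ⟨0, hn'⟩) (1 : K) * bs' ⟨0, hn'⟩).support := by
          rw [← hx0, ← hb0]
          rw [hsuppb] at hvb
          rcases Set.mem_iUnion.1 hvb with ⟨i, hi⟩
          have h1 : i = ⟨0, hn⟩ := Fin.ext (by omega)
          rwa [h1] at hi
        have := NF_sep h' ⟨0, hn'⟩ j (by rw [Fin.lt_def]; norm_num [hj]) _ hv0 _ hvj
        exact absurd this (lt_irrefl _)
      subst hm'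
      refine congrArg (Sigma.mk 1) ?_
      refine Prod.ext ?_ ?_
      · funext i
        have h1 : i = ⟨0, hn⟩ := Fin.ext (by omega)
        rw [h1]
        exact hx0
      · funext i
        have h1 : i = ⟨0, hn⟩ := Fin.ext (by omega)
        rw [h1]
        exact hb0
    · -- length at least two
      have hm2 : 2 ≤ m' := by
        by_contra hne
        have hm1 : m' = 1 := by omega
        set j : Fin (n + 1) := ⟨1, by omega⟩ with hj
        obtain ⟨q, hq⟩ := NF_supp_ne h j
        have hvj : x j + q ∈ (HahnSeries.single (x j) (1 : K) * bs j).support := by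
          rw [single_one_mul_support]; exact ⟨q, hq, rfl⟩
        have hvb : x j + q ∈ b.support := by
          rw [hsuppb]
          exact Set.mem_iUnion.2 ⟨j, hvj⟩
        have hv0 : x j + q ∈ (HahnSeries.single (x ⟨0, hn⟩) (1 : K) * bs ⟨0, hn⟩).support := by
          rw [hx0, hb0]
          rw [hsuppb'] at hvb
          rcases Set.mem_iUnion.1 hvb with ⟨i, hi⟩
          have h1 : i = ⟨0, hn'⟩ := by
            apply Fin.ext
            omega
          rwa [h1] at hi
        have := NF_sep h ⟨0, hn⟩ j (by rw [Fin.lt_def]; norm_num [hj]) _ hv0 _ hvj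
        exact absurd this (lt_irrefl _)
      obtain ⟨t, rfl⟩ : ∃ t, m' = t + 1 := ⟨m' - 1, by omega⟩
      have ht1 : 1 ≤ t := by omega
      set c0 := HahnSeries.single (x ⟨0, hn⟩) (1 : K) * bs ⟨0, hn⟩ with hc0
      set r := b - c0 with hr
      have hT : IsNF r ⟨n, (fun i : Fin n => x i.succ, fun i : Fin n => bs i.succ)⟩ := by
        refine ⟨hnpos, ?_, ?_, ?_, ?_, ?_, ?_⟩
        · intro i j hij
          exact h.2.1 i.succ j.succ (Fin.succ_le_succ_iff.2 hij)
        · intro i; exact h.2.2.1 i.succ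
        · intro i; exact h.2.2.2.1 i.succ
        · intro i j hij
          exact h.2.2.2.2.1 i.succ j.succ (Fin.succ_le_succ_iff.2 hij)
        · intro i j hij
          exact h.2.2.2.2.2.1 i.succ j.succ (Fin.succ_lt_succ_iff.2 hij)
        · have hs := h.2.2.2.2.2.2
          rw [Fin.sum_univ_succ] at hs
          rw [hr, ← hs, hc0]
          show (∑ i : Fin n, HahnSeries.single (x i.succ) (1 : K) * bs i.succ) = _
          have h0eq : (0 : Fin (n + 1)) = ⟨0, hn⟩ := rfl
          rw [← h0eq]
          ring
      have hT' : IsNF r ⟨t, (fun i : Fin t => x' i.succ, fun i : Fin t => bs' i.succ)⟩ := by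
        refine ⟨ht1, ?_, ?_, ?_, ?_, ?_, ?_⟩
        · intro i j hij
          exact h'.2.1 i.succ j.succ (Fin.succ_le_succ_iff.2 hij)
        · intro i; exact h'.2.2.1 i.succ
        · intro i; exact h'.2.2.2.1 i.succ
        · intro i j hij
          exact h'.2.2.2.2.1 i.succ j.succ (Fin.succ_le_succ_iff.2 hij)
        · intro i j hij
          exact h'.2.2.2.2.2.1 i.succ j.succ (Fin.succ_lt_succ_iff.2 hij)
        · have hs := h'.2.2.2.2.2.2
          rw [Fin.sum_univ_succ] at hs
          rw [hr, ← hs, hc0, hx0, hb0]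
          show (∑ i : Fin t, HahnSeries.single (x' i.succ) (1 : K) * bs' i.succ) = _
          have h0eq : (0 : Fin (t + 1)) = ⟨0, hn'⟩ := rfl
          rw [← h0eq]
          ring
      have htail := IH r ⟨n, (fun i : Fin n => x i.succ, fun i : Fin n => bs i.succ)⟩
        ⟨t, (fun i : Fin t => x' i.succ, fun i : Fin t => bs' i.succ)⟩ hT hT' rfl
      have htn : n = t := congrArg Sigma.fst htail
      subst htn
      have hsnd : (fun i : Fin n => x i.succ, fun i : Fin n => bs i.succ)
          = (fun i : Fin n => x' i.succ, fun i : Fin n => bs' i.succ) :=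
        eq_of_heq (Sigma.mk.inj_iff.1 htail).2
      refine congrArg (Sigma.mk (n + 1)) ?_
      refine Prod.ext ?_ ?_
      · funext i
        induction i using Fin.cases with
        | zero => exact hx0
        | succ i => exact congrFun (congrArg Prod.fst hsnd) i
      · funext i
        induction i using Fin.cases with
        | zero => exact hb0
        | succ i => exact congrFun (congrArg Prod.snd hsnd) i

end Final

/-- Every nonzero `b ∈ K((ℝ≤0))` has a unique normal form: unique `n ≥ 1`, reals
`x₁ ≤ … ≤ xₙ ≤ 0` and series `b₁, …, bₙ ∈ K((ℝ≤0))`, each `bᵢ` principal,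
`ot b₁ ≥ … ≥ ot bₙ`, every element of `xᵢ + supp bᵢ` strictly below every element
of `x_{i+1} + supp b_{i+1}`, and `b = b₁ t^{x₁} + … + bₙ t^{xₙ}`. -/
theorem normal_form {K : Type*} [Field K]
    (b : HahnSeries ℝ K) (hb0 : b ≠ 0) (hb : ∀ x ∈ b.support, x ≤ 0) :
    ∃! nf : Σ n : ℕ, (Fin n → ℝ) × (Fin n → HahnSeries ℝ K),
      1 ≤ nf.1 ∧
      (∀ i j : Fin nf.1, i ≤ j → nf.2.1 i ≤ nf.2.1 j) ∧
      (∀ i, nf.2.1 i ≤ 0) ∧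
      (∀ i, (∀ x ∈ (nf.2.2 i).support, x ≤ 0) ∧ principalSeries (nf.2.2 i)) ∧
      (∀ i j : Fin nf.1, i ≤ j → (nf.2.2 j).ot ≤ (nf.2.2 i).ot) ∧
      (∀ i j : Fin nf.1, i < j →
        ∀ x ∈ (nf.2.2 i).support, ∀ y ∈ (nf.2.2 j).support,
          nf.2.1 i + x < nf.2.1 j + y) ∧
      ∑ i, HahnSeries.single (nf.2.1 i) (1 : K) * nf.2.2 i = b := by
  obtain ⟨nf, hnf⟩ := nf_exists b.ot b rfl hb0 hb
  refine ⟨nf, hnf, ?_⟩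
  intro y hy
  exact nf_unique y.1 b y nf hy hnf rfl
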